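/- Let V be a finite-dimensional vector space over ℚ equipped with a quadratic form Q, fix v₀ ∈ V with Q(v₀) ≠ 0, and for v ∈ V let μ(v) denote the endomorphism a ↦ ι(v)·a·ι(v₀) of the even Clifford algebra C⁺(V). Suppose g ∈ C⁺(V) is such that left multiplication by g commutes with μ(v) for every v ∈ V, i.e. g·(ι(v)·a·ι(v₀)) = ι(v)·(g·a)·ι(v₀) for all v ∈ V and all a ∈ C⁺(V). Then g is a central element of C⁺(V): g·β = β·g for every β ∈ C⁺(V). -/
import Mathlib


open CliffordAlgebra

/-- If `g ∈ C⁺(V)` is such that left multiplication by `g` commutes with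
`μ v : a ↦ ι v * a * ι v₀` on `C⁺(V)` for every `v : V`, then `g` is central in `C⁺(V)`:
`g * β = β * g` for every `β ∈ C⁺(V)`. -/
theorem stmt2 (V : Type) [AddCommGroup V] [Module ℚ V] [FiniteDimensional ℚ V]
    (Q : QuadraticForm ℚ V) (v₀ : V) (hv₀ : Q v₀ ≠ 0)
    (g : CliffordAlgebra Q) (hg : g ∈ CliffordAlgebra.evenOdd Q 0)
    (hcomm : ∀ (v : V), ∀ a ∈ CliffordAlgebra.evenOdd Q 0,
      g * (CliffordAlgebra.ι Q v * a * CliffordAlgebra.ι Q v₀) =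
        CliffordAlgebra.ι Q v * (g * a) * CliffordAlgebra.ι Q v₀) :
    ∀ β ∈ CliffordAlgebra.evenOdd Q 0, g * β = β * g := by
  have h1 : (1 : CliffordAlgebra Q) ∈ CliffordAlgebra.evenOdd Q 0 :=
    Submodule.one_le.mp (CliffordAlgebra.one_le_evenOdd_zero Q)
  have hgι : ∀ v : V, g * ι Q v = ι Q v * g := by
    intro v
    have h := hcomm v 1 h1
    rw [mul_one, mul_one] at h
    have h2 : g * ι Q v * (ι Q v₀ * ι Q v₀) = ι Q v * g * (ι Q v₀ * ι Q v₀) := by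
      rw [← mul_assoc] at h
      rw [← mul_assoc, ← mul_assoc, h]
    rw [CliffordAlgebra.ι_sq_scalar, ← Algebra.commutes, ← Algebra.commutes,
      ← Algebra.smul_def, ← Algebra.smul_def] at h2
    exact smul_right_injective _ hv₀ h2
  have key : ∀ x : CliffordAlgebra Q, g * x = x * g := by
    intro x
    induction x using CliffordAlgebra.induction with
    | algebraMap r => rw [← Algebra.commutes]
    | ι v => exact hgι v
    | mul a b ha hb => rw [← mul_assoc, ha, mul_assoc, hb, mul_assoc]
    | add a b ha hb => rw [mul_add, add_mul, ha, hb]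
  exact fun β _ => key β
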